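/- There is no Shelah group of cardinality ℵ₀: for every positive integer n, no countably infinite group is n-Shelah. -/

import Mathlib

open Cardinal

/-- A group `G` of infinite cardinality is `n`-Shelah if for every subset `X ⊆ G` of full
cardinality, every element of `G` is a product of exactly `n` elements of `X`. -/
def IsNShelah (G : Type*) [Group G] (n : ℕ) : Prop :=
  ∀ X : Set G, #X = #G → ∀ g : G, ∃ f : Fin n → G, (∀ i, f i ∈ X) ∧ (List.ofFn f).prod = g

/-- Infinite Ramsey theorem, phrased with strictly monotone tuples: any coloring of
`m`-tuples of naturals with finitely many colors admits an infinite subset (given as the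
range of a strictly monotone map `r`) on which all increasing tuples get the same color. -/
theorem ramsey_tuples (K : Type) [Finite K] :
    ∀ (m : ℕ) (C : (Fin m → ℕ) → K),
      ∃ r : ℕ → ℕ, StrictMono r ∧ ∃ k : K, ∀ s : Fin m → ℕ, StrictMono s → C (r ∘ s) = k := by
  intro m
  induction m with
  | zero =>
    intro C
    refine ⟨id, strictMono_id, C (fun i => i.elim0), fun s hs => ?_⟩
    congr 1
    funext i
    exact i.elim0
  | succ m ih =>
    intro C
    classical
    -- one-step refinement
    have step : ∀ f : ℕ → ℕ, StrictMono f →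
        ∃ p : (ℕ → ℕ) × K, StrictMono p.1 ∧ (∀ x, 1 ≤ p.1 x) ∧
          ∀ s : Fin m → ℕ, StrictMono s → C (Fin.cons (f 0) ((f ∘ p.1) ∘ s)) = p.2 := by
      intro f hf
      obtain ⟨r, hr, k, hk⟩ := ih (fun s => C (Fin.cons (f 0) ((f ∘ Nat.succ) ∘ s)))
      refine ⟨(fun x => (r x).succ, k), fun a b hab => Nat.succ_lt_succ (hr hab),
        fun x => Nat.succ_le_succ (Nat.zero_le _), fun s hs => ?_⟩
      exact hk s hs
    -- iterate the refinement
    let T := {f : ℕ → ℕ // StrictMono f}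
    let hfun : T → (ℕ → ℕ) := fun t => (Classical.choose (step t.1 t.2)).1
    let kfun : T → K := fun t => (Classical.choose (step t.1 t.2)).2
    have hspec : ∀ t : T, StrictMono (hfun t) ∧ (∀ x, 1 ≤ hfun t x) ∧
        ∀ s : Fin m → ℕ, StrictMono s →
          C (Fin.cons (t.1 0) ((t.1 ∘ hfun t) ∘ s)) = kfun t :=
      fun t => Classical.choose_spec (step t.1 t.2)
    let FS : ℕ → T := fun i =>
      Nat.rec ⟨id, strictMono_id⟩ (fun _ t => ⟨t.1 ∘ hfun t, t.2.comp (hspec t).1⟩) i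
    have hFSsucc : ∀ i, (FS (i + 1)).1 = (FS i).1 ∘ hfun (FS i) := fun i => rfl
    let b : ℕ → ℕ := fun i => (FS i).1 0
    let kseq : ℕ → K := fun i => kfun (FS i)
    -- composites of the refinement maps
    let Hc : ℕ → ℕ → (ℕ → ℕ) := fun i d =>
      Nat.rec id (fun d' H => H ∘ hfun (FS (i + d'))) d
    have hHc_strict : ∀ i d, StrictMono (Hc i d) := by
      intro i d
      induction d with
      | zero => exact strictMono_id
      | succ d ihd => exact ihd.comp (hspec (FS (i + d))).1
    have hHc_f : ∀ i d, (FS (i + d)).1 = (FS i).1 ∘ Hc i d := by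
      intro i d
      induction d with
      | zero => rfl
      | succ d ihd =>
        show (FS ((i + d) + 1)).1 = _
        rw [hFSsucc (i + d), ihd]
        rfl
    have hb : ∀ i d, b (i + d) = (FS i).1 (Hc i d 0) := by
      intro i d
      show (FS (i + d)).1 0 = _
      rw [hHc_f i d]
      rfl
    have hc_strict : ∀ i, StrictMono (fun d => Hc i d 0) := by
      intro i
      apply strictMono_nat_of_lt_succ
      intro d
      show Hc i d 0 < (Hc i d ∘ hfun (FS (i + d))) 0
      exact hHc_strict i d (lt_of_lt_of_le Nat.zero_lt_one ((hspec (FS (i + d))).2.1 0))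
    have hb_strict : StrictMono b := by
      apply strictMono_nat_of_lt_succ
      intro i
      show (FS i).1 0 < (FS (i + 1)).1 0
      rw [hFSsucc i]
      exact (FS i).2 (lt_of_lt_of_le Nat.zero_lt_one ((hspec (FS i)).2.1 0))
    -- pigeonhole on the colors
    obtain ⟨kstar, hkstar⟩ := Finite.exists_infinite_fiber kseq
    have hinf : {i | kseq i = kstar}.Infinite := by
      rw [← Set.infinite_coe_iff]
      exact hkstar
    let ψ := Nat.nth (fun i => kseq i = kstar)
    have hψ : StrictMono ψ := Nat.nth_strictMono hinf
    have hψmem : ∀ j, kseq (ψ j) = kstar := fun j => Nat.nth_mem_of_infinite hinf j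
    refine ⟨b ∘ ψ, hb_strict.comp hψ, kstar, ?_⟩
    intro s hs
    set i := ψ (s 0) with hi
    have hge : ∀ j : Fin m, i + 1 ≤ ψ (s j.succ) := by
      intro j
      exact Nat.succ_le_of_lt (hψ (hs (Fin.succ_pos j)))
    let s' : Fin m → ℕ := fun j => Hc (i + 1) (ψ (s j.succ) - (i + 1)) 0
    have hs' : StrictMono s' := by
      intro a c hac
      apply hc_strict (i + 1)
      have h1 : ψ (s a.succ) < ψ (s c.succ) := hψ (hs (Fin.succ_lt_succ_iff.mpr hac))
      have h2 := hge a
      have h3 := hge c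
      omega
    have key : (b ∘ ψ) ∘ s = Fin.cons ((FS i).1 0) (((FS i).1 ∘ hfun (FS i)) ∘ s') := by
      funext j
      refine Fin.cases ?_ ?_ j
      · show b (ψ (s 0)) = _
        rw [Fin.cons_zero]
      · intro j
        show b (ψ (s j.succ)) = _
        rw [Fin.cons_succ]
        have h1 : ψ (s j.succ) = (i + 1) + (ψ (s j.succ) - (i + 1)) := by
          have := hge j
          omega
        calc b (ψ (s j.succ)) = b ((i + 1) + (ψ (s j.succ) - (i + 1))) := by rw [← h1]
          _ = (FS (i + 1)).1 (Hc (i + 1) (ψ (s j.succ) - (i + 1)) 0) := hb (i + 1) _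
          _ = _ := by rw [hFSsucc i]; rfl
    rw [key, (hspec (FS i)).2.2 s' hs']
    exact hψmem (s 0)

/-- Key lemma: in a countable `n`-Shelah group, for every target `g` and every infinite
index set (range of strictly monotone `f`), there is a further infinite subset and a fixed
pattern `σ` such that every increasing tuple, read through `σ`, multiplies to `g`. -/
theorem shelah_pattern {G : Type*} [Group G] {n : ℕ} (hG : #G = ℵ₀)
    (hS : IsNShelah G n) (y : ℕ → G) (hy : Function.Injective y) (g : G)
    (f : ℕ → ℕ) (hf : StrictMono f) :
    ∃ r : ℕ → ℕ, StrictMono r ∧ ∃ σ : Fin n → Fin n, ∀ s : Fin n → ℕ, StrictMono s →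
      (List.ofFn fun i => y (f (r (s (σ i))))).prod = g := by
  classical
  obtain ⟨r, hr, k, hk⟩ := ramsey_tuples ((Fin n → Fin n) → Bool) n
    (fun s => fun σ => decide ((List.ofFn fun i => y (f (s (σ i)))).prod = g))
  refine ⟨r, hr, ?_⟩
  have hinj : Function.Injective (y ∘ f ∘ r) := hy.comp (hf.injective.comp hr.injective)
  have hcnt : Countable ↥(Set.range (y ∘ f ∘ r)) := by
    apply Set.countable_range (y ∘ f ∘ r) |>.to_subtype
  have hinfX : Infinite ↥(Set.range (y ∘ f ∘ r)) :=
    Set.infinite_coe_iff.mpr (Set.infinite_range_of_injective hinj)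
  have hX : #(Set.range (y ∘ f ∘ r)) = #G := by
    rw [hG]
    exact Cardinal.mk_eq_aleph0 _
  obtain ⟨v, hvX, hvp⟩ := hS _ hX g
  choose a ha using fun i => hvX i
  -- sort the indices `a`
  have hcard : (Finset.image a Finset.univ).card ≤ n :=
    le_trans Finset.card_image_le (by simp)
  obtain ⟨Tf, hMT, hT⟩ := Infinite.exists_superset_card_eq (Finset.image a Finset.univ) n hcard
  let e := Tf.orderIsoOfFin hT
  let s₀ : Fin n → ℕ := fun i => (e i : ℕ)
  have hs₀ : StrictMono s₀ := fun i j hij => by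
    exact_mod_cast e.strictMono hij
  let σ : Fin n → Fin n := fun i =>
    e.symm ⟨a i, hMT (Finset.mem_image_of_mem a (Finset.mem_univ i))⟩
  have hsσ : ∀ i, s₀ (σ i) = a i := by
    intro i
    show ((e (e.symm _) : Tf) : ℕ) = a i
    rw [e.apply_symm_apply]
  have hkσ : k σ = true := by
    rw [← congrFun (hk s₀ hs₀) σ]
    rw [decide_eq_true_iff]
    have hfeq : (fun i => y (f ((r ∘ s₀) (σ i)))) = v := by
      funext i
      show y (f (r (s₀ (σ i)))) = v i
      rw [hsσ i]
      exact ha i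
    rw [hfeq]
    exact hvp
  refine ⟨σ, fun s hs => ?_⟩
  have h2 := congrFun (hk s hs) σ
  rw [hkσ] at h2
  have h3 : decide ((List.ofFn fun i => y (f (r (s (σ i))))).prod = g) = true := h2
  exact of_decide_eq_true h3

/-- There is no Shelah group of cardinality `ℵ₀`: for every positive integer `n`, no countably
infinite group is `n`-Shelah. -/
theorem no_countable_shelah_group (G : Type*) [Group G] (hG : #G = ℵ₀) :
    ∀ n : ℕ, 0 < n → ¬ IsNShelah G n := by
  intro n _hn hS
  classical
  have hinfG : Infinite G := Cardinal.infinite_iff.mpr (by rw [hG])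
  let y : ℕ → G := fun i => Infinite.natEmbedding G i
  have hy : Function.Injective y := (Infinite.natEmbedding G).injective
  -- refine for a list of targets
  have chain : ∀ (l : List G) (f : ℕ → ℕ), StrictMono f →
      ∃ r : ℕ → ℕ, StrictMono r ∧ ∀ g ∈ l, ∃ σ : Fin n → Fin n,
        ∀ s : Fin n → ℕ, StrictMono s →
          (List.ofFn fun i => y (f (r (s (σ i))))).prod = g := by
    intro l
    induction l with
    | nil => exact fun f hf => ⟨id, strictMono_id, by simp⟩
    | cons g l ihl =>
      intro f hf
      obtain ⟨r₁, hr₁, σ₁, h₁⟩ := shelah_pattern hG hS y hy g f hf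
      obtain ⟨r₂, hr₂, h₂⟩ := ihl (f ∘ r₁) (hf.comp hr₁)
      refine ⟨r₁ ∘ r₂, hr₁.comp hr₂, ?_⟩
      intro g' hg'
      rcases List.mem_cons.mp hg' with h | h
      · subst h
        exact ⟨σ₁, fun s hs => h₁ (r₂ ∘ s) (hr₂.comp hs)⟩
      · obtain ⟨σ, hσ⟩ := h₂ g' h
        exact ⟨σ, fun s hs => hσ s hs⟩
  set N := n ^ n + 1 with hN
  obtain ⟨r, hr, hall⟩ := chain ((List.range N).map y) id strictMono_id
  have hφ : ∀ j : Fin N, ∃ σ : Fin n → Fin n,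
      ∀ s : Fin n → ℕ, StrictMono s →
        (List.ofFn fun i => y (id (r (s (σ i))))).prod = y (j : ℕ) := fun j =>
    hall (y (j : ℕ)) (List.mem_map_of_mem (List.mem_range.mpr j.isLt))
  choose φ hφs using hφ
  have hcard : Fintype.card (Fin n → Fin n) < Fintype.card (Fin N) := by
    rw [Fintype.card_fun]
    simp [hN]
  obtain ⟨j, j', hne, hjj⟩ := Fintype.exists_ne_map_eq_of_card_lt φ hcard
  have hval : StrictMono (Fin.val : Fin n → ℕ) := fun _ _ h => h
  have e1 := hφs j Fin.val hval
  have e2 := hφs j' Fin.val hval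
  rw [hjj] at e1
  have : y (j : ℕ) = y (j' : ℕ) := e1.symm.trans e2
  exact hne (Fin.ext (hy this))
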